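/- Let φ, Σ, Θ, μ, p, Π, E, Q, A : ℝ → ℝ be differentiable functions, write s = Σ − (2/3)Θ, and suppose the evolution equations hold at t₀: (i) φ′ = −s·(A − φ/2) + Q; (ii) s′ = −A·φ + (1/2)·s² + (μ + 3p)/3 − E + Π/2; (iii) (E − μ/3 + Π/2)′ = (3E/2 + Π/4)·s + (1/2)·φ·Q − (1/2)·(μ + p)·s. Define C = φ² − s² + (1/2)·(E − μ/3 + Π/2). If C(t₀) = 0, C′(t₀) = 0 and φ(t₀) ≠ 0, then Q(t₀) = (s(t₀)/φ(t₀))·((μ(t₀) + 3p(t₀))/3 + Π(t₀)/2 − E(t₀)). (An accreting star remaining in Virial equilibrium must expel exactly this heat flux.) -/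

import Mathlib

/-- An accreting star remaining in Virial equilibrium (C = 0 with Ċ = 0 at t₀)
must expel exactly the heat flux Q = (s/φ)·((μ + 3p)/3 + Π/2 − E). -/
theorem virial_equilibrium_heat_flux
    (φ Sg Θ μ p Pa E Q A : ℝ → ℝ) (t₀ : ℝ)
    (hφdiff : Differentiable ℝ φ) (hSgdiff : Differentiable ℝ Sg)
    (hΘdiff : Differentiable ℝ Θ) (hμdiff : Differentiable ℝ μ)
    (hpdiff : Differentiable ℝ p) (hPadiff : Differentiable ℝ Pa)
    (hEdiff : Differentiable ℝ E) (hQdiff : Differentiable ℝ Q)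
    (hAdiff : Differentiable ℝ A)
    (s : ℝ → ℝ) (hs : s = fun t => Sg t - (2/3) * Θ t)
    (hφdot : deriv φ t₀ = -s t₀ * (A t₀ - φ t₀ / 2) + Q t₀)
    (hsdot : deriv s t₀
      = -A t₀ * φ t₀ + (1/2) * (s t₀)^2 + (μ t₀ + 3 * p t₀) / 3 - E t₀ + Pa t₀ / 2)
    (hBianchi : deriv (fun t => E t - μ t / 3 + Pa t / 2) t₀
      = (3 * E t₀ / 2 + Pa t₀ / 4) * s t₀ + (1/2) * φ t₀ * Q t₀
        - (1/2) * (μ t₀ + p t₀) * s t₀)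
    (C : ℝ → ℝ)
    (hC : C = fun t => (φ t)^2 - (s t)^2 + (1/2) * (E t - μ t / 3 + Pa t / 2))
    (hC0 : C t₀ = 0) (hCdot0 : deriv C t₀ = 0) (hφne : φ t₀ ≠ 0) :
    Q t₀ = (s t₀ / φ t₀) * ((μ t₀ + 3 * p t₀) / 3 + Pa t₀ / 2 - E t₀) := by
  have hsdiff : Differentiable ℝ s := by
    rw [hs]; exact hSgdiff.sub (hΘdiff.const_mul _)
  have hXd : DifferentiableAt ℝ (fun t => E t - μ t / 3 + Pa t / 2) t₀ :=
    ((hEdiff.sub (hμdiff.div_const 3)).add (hPadiff.div_const 2)) t₀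
  have hC' : HasDerivAt C
      (2 * φ t₀ * deriv φ t₀ - 2 * s t₀ * deriv s t₀
        + (1/2) * deriv (fun t => E t - μ t / 3 + Pa t / 2) t₀) t₀ := by
    rw [hC]
    have h1 := (hφdiff t₀).hasDerivAt.pow 2
    have h2 := (hsdiff t₀).hasDerivAt.pow 2
    have h3 := hXd.hasDerivAt.const_mul (1/2 : ℝ)
    exact ((h1.sub h2).add h3).congr_deriv (by norm_num)
  rw [hC'.deriv, hφdot, hsdot, hBianchi] at hCdot0
  rw [hC] at hC0
  simp only at hC0
  have hQ : φ t₀ * Q t₀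
      = s t₀ * ((μ t₀ + 3 * p t₀) / 3 + Pa t₀ / 2 - E t₀) := by
    linear_combination (4/9) * hCdot0 - (4/9) * s t₀ * hC0
  field_simp
  linear_combination 6 * hQ
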